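/- Two-variable Jack transition matrix inverse: let d ≥ 2 and define the upper-triangular matrix A indexed by 0 ≤ i ≤ j ≤ ⌊d/2⌋ with entries A_{ij} = C(d−2i, j−i)·⟨σ⟩_{j−i}⟨σ⟩_{d−j−i}/⟨σ⟩_{d−2i}. Then its inverse has entries B_{ij} = (−1)^{j−i}·C(d−i−j, j−i)·((d−2i)/(d−i−j))·⟨σ+i−j+1⟩_{d−i−j}·⟨σ+d−i−j+1⟩_{j−i}/⟨σ+1⟩_{d−2i} (with the factor (d−2i)/(d−i−j) interpreted as 1 when i = j = d/2), as an identity of rational functions in σ. -/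

import Mathlib

open Finset

/-- The rising factorial (Pochhammer symbol) `⟨x⟩_k = x(x+1)⋯(x+k-1)`. -/
noncomputable def poch (x : ℝ) (k : ℕ) : ℝ := ∏ i ∈ Finset.range k, (x + i)

lemma poch_zero (x : ℝ) : poch x 0 = 1 := by simp [poch]

lemma poch_succ (x : ℝ) (k : ℕ) : poch x (k+1) = poch x k * (x + k) := by
  simp [poch, Finset.prod_range_succ]

lemma poch_succ' (x : ℝ) (k : ℕ) : poch x (k+1) = x * poch (x+1) k := by
  rw [poch, Finset.prod_range_succ']
  simp only [Nat.cast_add, Nat.cast_zero, add_zero, Nat.cast_one]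
  rw [mul_comm, poch]
  congr 1
  apply Finset.prod_congr rfl
  intro i _
  push_cast
  ring

lemma poch_pos {x : ℝ} (hx : 0 < x) (k : ℕ) : 0 < poch x k := by
  apply Finset.prod_pos
  intro i _
  positivity

lemma poch_shift (x : ℝ) (k : ℕ) : poch x k * (x + k) = x * poch (x+1) k := by
  rw [← poch_succ, ← poch_succ']

set_option maxHeartbeats 2000000 in
lemma step (t a b : ℕ) (σ : ℝ) (hσ : 0 < σ) :
    ((((2*t+a+b+2).choose t : ℝ) * poch σ t * poch σ (t+a+b+2) / poch σ (2*t+a+b+2)) *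
      ((-1:ℝ)^(a+1) * (((b+1).choose (a+1) : ℝ)) * (((a:ℝ)+(b:ℝ)+2)/((b:ℝ)+1)) *
        poch (σ - a) (b+1) * poch (σ + b + 2) (a+1) / poch (σ+1) (a+b+2))) =
    ((-1:ℝ)^(a+1) * (((t:ℝ)+1)/((t:ℝ)+(a:ℝ)+1)) * (((2*t+a+b+2).choose (t+1) : ℝ)) *
        ((b.choose a : ℝ)) * (poch σ (t+1)) * poch σ (t+a+b+2) * poch (σ - a) (b+1) *
        poch (σ + b + 1) a /
        (σ * (σ + t + b + 1) * poch σ (2*t+a+b+2) * poch (σ+1) (a+b)))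
    - ((-1:ℝ)^(a+2) * ((t:ℝ)/((t:ℝ)+(a:ℝ)+1)) * (((2*t+a+b+2).choose t : ℝ)) *
        (((b+1).choose (a+1) : ℝ)) * poch σ t * poch σ (t+a+b+3) * poch (σ - a - 1) (b+2) *
        poch (σ + b + 2) (a+1) /
        (σ * (σ + t + b + 1) * poch σ (2*t+a+b+2) * poch (σ+1) (a+b+2))) := by
  have h1 : poch σ (t+1) = poch σ t * (σ+t) := poch_succ σ t
  have h2 : poch σ (t+a+b+3) = poch σ (t+a+b+2) * (σ+t+a+b+2) := by
    rw [show t+a+b+3 = (t+a+b+2)+1 by omega, poch_succ]; push_cast; ring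
  have h3 : poch (σ - a - 1) (b+2) = (σ - a - 1) * poch (σ - a) (b+1) := by
    rw [show b+2 = (b+1)+1 by omega, poch_succ']; ring_nf
  have h4 : poch (σ+b+2) (a+1) = poch (σ+b+2) a * (σ+a+b+2) := by
    rw [poch_succ]; ring
  have h5 : poch (σ+b+1) a * (σ+a+b+1) = (σ+b+1) * poch (σ+b+2) a := by
    have := poch_shift (σ+b+1) a
    rw [show σ+b+1+(a:ℝ) = σ+a+b+1 by ring, show σ+b+1+1 = σ+b+2 by ring] at this
    exact this
  have h6 : poch (σ+1) (a+b+2) = poch (σ+1) (a+b) * (σ+a+b+1) * (σ+a+b+2) := by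
    rw [show a+b+2 = (a+b)+1+1 by omega, poch_succ, poch_succ]; push_cast; ring
  have h7 : ((2*t+a+b+2).choose (t+1) : ℝ) * (t+1) = ((2*t+a+b+2).choose t : ℝ) * ((t:ℝ)+(a:ℝ)+(b:ℝ)+2) := by
    have h := Nat.choose_succ_right_eq (2*t+a+b+2) t
    rw [show 2*t+a+b+2 - t = t+a+b+2 by omega] at h
    have h' := congrArg (Nat.cast : ℕ → ℝ) h
    push_cast at h'
    linarith [h']
  have h8 : ((b+1).choose (a+1) : ℝ) * ((a:ℝ)+1) = (b.choose a : ℝ) * ((b:ℝ)+1) := by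
    have := Nat.add_one_mul_choose_eq b a
    have h := congrArg (Nat.cast : ℕ → ℝ) this
    push_cast at h
    linarith [h]
  have ht1 : ((t:ℝ)+1) ≠ 0 := by positivity
  have ha1 : ((a:ℝ)+1) ≠ 0 := by positivity
  have hb1 : ((b:ℝ)+1) ≠ 0 := by positivity
  have hta1 : ((t:ℝ)+(a:ℝ)+1) ≠ 0 := by positivity
  have hs1 : σ + (a:ℝ) + (b:ℝ) + 1 ≠ 0 := by positivity
  have hs2 : σ + (a:ℝ) + (b:ℝ) + 2 ≠ 0 := by positivity
  have hs3 : σ + (t:ℝ) + (b:ℝ) + 1 ≠ 0 := by positivity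
  have hs0 : σ ≠ 0 := ne_of_gt hσ
  have hpn : poch σ (2*t+a+b+2) ≠ 0 := ne_of_gt (poch_pos hσ _)
  have hpe : poch (σ+1) (a+b) ≠ 0 := ne_of_gt (poch_pos (by linarith) _)
  have hc : ((2*t+a+b+2).choose (t+1) : ℝ) =
      ((2*t+a+b+2).choose t : ℝ) * ((t:ℝ)+(a:ℝ)+(b:ℝ)+2)/((t:ℝ)+1) := by
    field_simp; linarith [h7]
  have hcb : ((b+1).choose (a+1) : ℝ) = (b.choose a : ℝ) * ((b:ℝ)+1)/((a:ℝ)+1) := by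
    field_simp; linarith [h8]
  have hp : poch (σ+(b:ℝ)+1) a = (σ+(b:ℝ)+1) * poch (σ+(b:ℝ)+2) a / (σ+(a:ℝ)+(b:ℝ)+1) := by
    field_simp; linarith [h5]
  rw [h1, h2, h3, h4, h6, hc, hcb, hp]
  generalize poch σ t = A0
  generalize poch σ (t+a+b+2) = B0
  generalize poch (σ-(a:ℝ)) (b+1) = P
  generalize hRN : poch (σ+(b:ℝ)+2) a = R
  generalize hNN : poch σ (2*t+a+b+2) = N at hpn
  generalize hEE : poch (σ+1) (a+b) = E at hpe
  generalize ((2*t+a+b+2).choose t : ℝ) = c1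
  generalize (Nat.choose b a : ℝ) = c2
  generalize hxx : (t:ℝ) = x at ht1 hta1 hs3 ⊢
  generalize hyy : (a:ℝ) = y at ha1 hta1 hs1 hs2 ⊢
  generalize hzz : (b:ℝ) = z at hb1 hs1 hs2 hs3 ⊢
  rw [show ((-1:ℝ)^(a+2)) = -((-1:ℝ)^(a+1)) by rw [pow_succ]; ring]
  have key : (y+z+2) / ((y+1)*(σ+y+z+1)) =
      (x+y+z+2)*((σ+x)*(σ+z+1)) / ((x+y+1)*(σ*((σ+x+z+1)*(σ+y+z+1)))) +
      x*((z+1)*((σ+x+y+z+2)*(σ-y-1))) / ((x+y+1)*((y+1)*(σ*((σ+x+z+1)*(σ+y+z+1))))) := by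
    rw [div_add_div _ _ (by positivity) (by positivity), div_eq_div_iff (by positivity) (by positivity)]
    ring
  have e1 : c1 * A0 * B0 / N *
      ((-1) ^ (a + 1) * (c2 * (z + 1) / (y + 1)) * ((y + z + 2) / (z + 1)) * P * (R * (σ + y + z + 2)) /
        (E * (σ + y + z + 1) * (σ + y + z + 2))) =
      ((-1:ℝ)^(a+1) * c1 * c2 * A0 * B0 * P * R / (N * E)) * ((y+z+2) / ((y+1)*(σ+y+z+1))) := by
    field_simp
  have e2 : (-1) ^ (a + 1) * ((x + 1) / (x + y + 1)) * (c1 * (x + y + z + 2) / (x + 1)) * c2 * (A0 * (σ + x)) * B0 * P *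
          ((σ + z + 1) * R / (σ + y + z + 1)) /
        (σ * (σ + x + z + 1) * N * E) =
      ((-1:ℝ)^(a+1) * c1 * c2 * A0 * B0 * P * R / (N * E)) *
        ((x+y+z+2)*((σ+x)*(σ+z+1)) / ((x+y+1)*(σ*((σ+x+z+1)*(σ+y+z+1))))) := by
    field_simp
  have e3 : -(-1:ℝ) ^ (a + 1) * (x / (x + y + 1)) * c1 * (c2 * (z + 1) / (y + 1)) * A0 * (B0 * (σ + x + y + z + 2)) *
            ((σ - y - 1) * P) *
          (R * (σ + y + z + 2)) /
        (σ * (σ + x + z + 1) * N * (E * (σ + y + z + 1) * (σ + y + z + 2))) =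
      -(((-1:ℝ)^(a+1) * c1 * c2 * A0 * B0 * P * R / (N * E)) *
        (x*((z+1)*((σ+x+y+z+2)*(σ-y-1))) / ((x+y+1)*((y+1)*(σ*((σ+x+z+1)*(σ+y+z+1))))))) := by
    field_simp
  rw [e1, e2, e3, key]
  ring

set_option maxHeartbeats 2000000

lemma key (n m : ℕ) (hm : 1 ≤ m) (hmn : 2*m ≤ n) (σ : ℝ) (hσ : 0 < σ) :
    ∑ t ∈ Finset.range (m+1),
      (((n.choose t : ℝ) * poch σ t * poch σ (n - t) / poch σ n) *
        ((-1:ℝ)^(m-t) * (((n-m-t).choose (m-t) : ℝ)) *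
          (if t = m then (1:ℝ) else ((n:ℝ) - 2*t)/((n:ℝ) - (m:ℝ) - (t:ℝ))) *
          poch (σ + (t:ℝ) - (m:ℝ) + 1) (n-m-t) * poch (σ + ((n:ℝ) - (m:ℝ) - (t:ℝ)) + 1) (m-t) /
          poch (σ+1) (n - 2*t))) = 0 := by
  set g : ℕ → ℝ := fun T => (-1:ℝ)^(m-T+1) * ((T:ℝ)/(m:ℝ)) * (n.choose T : ℝ) *
      (((n-m-T).choose (m-T) : ℝ)) * poch σ T * poch σ (n-T+1) *
      poch (σ + (T:ℝ) - (m:ℝ)) (n-m-T+1) * poch (σ + ((n:ℝ) - (m:ℝ) - (T:ℝ)) + 1) (m-T) /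
      (σ * (σ + (n:ℝ) - (m:ℝ)) * poch σ n * poch (σ+1) (n-2*T)) with hg
  have hstep : ∀ t ∈ Finset.range m,
      (((n.choose t : ℝ) * poch σ t * poch σ (n - t) / poch σ n) *
        ((-1:ℝ)^(m-t) * (((n-m-t).choose (m-t) : ℝ)) *
          (if t = m then (1:ℝ) else ((n:ℝ) - 2*t)/((n:ℝ) - (m:ℝ) - (t:ℝ))) *
          poch (σ + (t:ℝ) - (m:ℝ) + 1) (n-m-t) * poch (σ + ((n:ℝ) - (m:ℝ) - (t:ℝ)) + 1) (m-t) /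
          poch (σ+1) (n - 2*t))) = g (t+1) - g t := by
    intro t ht
    simp only [Finset.mem_range] at ht
    obtain ⟨a, ha⟩ : ∃ a, m = t+a+1 := ⟨m-t-1, by omega⟩
    obtain ⟨b, hb⟩ : ∃ b, n = 2*t+a+b+2 := ⟨n-m-t-1, by omega⟩
    subst ha; subst hb
    rw [if_neg (by omega)]
    simp only [hg]
    have hs := step t a b σ hσ
    simp only [show 2*t+a+b+2 - t = t+a+b+2 from by omega,
      show 2*t+a+b+2 - (t+a+1) - t = b+1 from by omega,
      show t+a+1 - t = a+1 from by omega,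
      show 2*t+a+b+2 - 2*t = a+b+2 from by omega,
      show t+a+1-(t+1)+1 = a+1 from by omega,
      show 2*t+a+b+2 - (t+a+1) - (t+1) = b from by omega,
      show t+a+1-(t+1) = a from by omega,
      show 2*t+a+b+2 - (t+1)+1 = t+a+b+2 from by omega,
      show 2*t+a+b+2 - (t+a+1) - (t+1)+1 = b+1 from by omega,
      show 2*t+a+b+2 - 2*(t+1) = a+b from by omega,
      show t+a+1-t+1 = a+2 from by omega,
      show (b+1) + 1 = b+2 from by omega,
      show t+a+b+2+1 = t+a+b+3 from by omega,
      show (a+1)+1 = a+2 from by omega]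
    rw [show (σ + (t:ℕ) - ((t+a+1:ℕ):ℝ) + 1 : ℝ) = σ - (a:ℕ) from by push_cast; ring,
      show (σ + (((2*t+a+b+2:ℕ):ℝ) - ((t+a+1:ℕ):ℝ) - ((t:ℕ):ℝ)) + 1 : ℝ) = σ + (b:ℕ) + 2 from by push_cast; ring,
      show (σ + ((t+1:ℕ):ℝ) - ((t+a+1:ℕ):ℝ) : ℝ) = σ - (a:ℕ) from by push_cast; ring,
      show (σ + (((2*t+a+b+2:ℕ):ℝ) - ((t+a+1:ℕ):ℝ) - ((t+1:ℕ):ℝ)) + 1 : ℝ) = σ + (b:ℕ) + 1 from by push_cast; ring,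
      show (((2*t+a+b+2:ℕ):ℝ) - 2*((t:ℕ):ℝ) : ℝ) = (a:ℕ) + (b:ℕ) + 2 from by push_cast; ring,
      show (((2*t+a+b+2:ℕ):ℝ) - ((t+a+1:ℕ):ℝ) - ((t:ℕ):ℝ) : ℝ) = ((b:ℕ):ℝ) + 1 from by push_cast; ring,
      show (((t+1:ℕ):ℝ) / ((t+a+1:ℕ):ℝ) : ℝ) = (((t:ℕ):ℝ)+1) / (((t:ℕ):ℝ)+((a:ℕ):ℝ)+1) from by push_cast; ring,
      show (((t:ℕ):ℝ) / ((t+a+1:ℕ):ℝ) : ℝ) = ((t:ℕ):ℝ) / (((t:ℕ):ℝ)+((a:ℕ):ℝ)+1) from by push_cast; ring,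
      show (σ + ((2*t+a+b+2:ℕ):ℝ) - ((t+a+1:ℕ):ℝ) : ℝ) = σ + (t:ℕ) + (b:ℕ) + 1 from by push_cast; ring,
      show (σ + ((t:ℕ):ℝ) - ((t+a+1:ℕ):ℝ) : ℝ) = σ - (a:ℕ) - 1 from by push_cast; ring]
    exact hs
  rw [Finset.sum_range_succ, Finset.sum_congr rfl hstep, Finset.sum_range_sub g m]
  rw [if_pos rfl]
  obtain ⟨c, hc⟩ : ∃ c, n = 2*m+c := ⟨n-2*m, by omega⟩
  subst hc
  simp only [hg]
  simp only [show m - m = 0 from by omega, show 2*m+c-m-m = c from by omega,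
    show 2*m+c-m+1 = m+c+1 from by omega, show 2*m+c-m = m+c from by omega,
    show 2*m+c-2*m = c from by omega, show m - 0 + 1 = m+1 from by omega,
    show c + 1 = c+1 from rfl, Nat.cast_zero, poch_zero, Nat.choose_zero_right]
  rw [show (σ + (m:ℕ) - ((m:ℕ):ℝ) : ℝ) = σ from by push_cast; ring,
    show (σ + ((2*m+c:ℕ):ℝ) - ((m:ℕ):ℝ) : ℝ) = σ + (m:ℕ) + (c:ℕ) from by push_cast; ring]
  have hm0 : ((m:ℕ):ℝ) ≠ 0 := Nat.cast_ne_zero.mpr (by omega)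
  simp only [zero_div, mul_zero, zero_mul, sub_zero, pow_zero, Nat.cast_one, one_mul, mul_one,
    show m+c-m+1 = c+1 from by omega, show m+c-m = c from by omega]
  have hX : σ + ((m:ℕ):ℝ) + ((c:ℕ):ℝ) ≠ 0 := by positivity
  rw [poch_succ σ (m+c), poch_succ' σ c]
  have e1 : poch σ (2*m+c) ≠ 0 := ne_of_gt (poch_pos hσ _)
  have e2 : poch (σ+1) c ≠ 0 := ne_of_gt (poch_pos (by linarith) _)
  field_simp
  push_cast
  ring

/-- The transition matrix `A` from two-variable Jack polynomials to monomials: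
`A_{ij} = C(d-2i, j-i)·⟨σ⟩_{j-i}⟨σ⟩_{d-j-i}/⟨σ⟩_{d-2i}` for `i ≤ j`, zero otherwise. -/
noncomputable def jackTransition (d : ℕ) (σ : ℝ) :
    Matrix (Fin (d / 2 + 1)) (Fin (d / 2 + 1)) ℝ :=
  Matrix.of fun i j =>
    if (i : ℕ) ≤ (j : ℕ) then
      ((d - 2 * (i : ℕ)).choose ((j : ℕ) - (i : ℕ))) *
        poch σ ((j : ℕ) - (i : ℕ)) * poch σ (d - (j : ℕ) - (i : ℕ)) /
        poch σ (d - 2 * (i : ℕ))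
    else 0

/-- The claimed inverse matrix `B`, with
`B_{ij} = (-1)^{j-i}·C(d-i-j, j-i)·((d-2i)/(d-i-j))·⟨σ+i-j+1⟩_{d-i-j}·⟨σ+d-i-j+1⟩_{j-i}/⟨σ+1⟩_{d-2i}`
(the factor `(d-2i)/(d-i-j)` being interpreted as `1` when `i = j = d/2`). -/
noncomputable def jackTransitionInv (d : ℕ) (σ : ℝ) :
    Matrix (Fin (d / 2 + 1)) (Fin (d / 2 + 1)) ℝ :=
  Matrix.of fun i j =>
    if (i : ℕ) ≤ (j : ℕ) then
      (-1 : ℝ) ^ ((j : ℕ) - (i : ℕ)) *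
        ((d - (i : ℕ) - (j : ℕ)).choose ((j : ℕ) - (i : ℕ))) *
        (if (i : ℕ) = (j : ℕ) then (1 : ℝ)
          else ((d : ℝ) - 2 * (i : ℕ)) / ((d : ℝ) - (i : ℕ) - (j : ℕ))) *
        poch (σ + (i : ℕ) - (j : ℕ) + 1) (d - (i : ℕ) - (j : ℕ)) *
        poch (σ + (d : ℝ) - (i : ℕ) - (j : ℕ) + 1) ((j : ℕ) - (i : ℕ)) /
        poch (σ + 1) (d - 2 * (i : ℕ))
    else 0

/-- The two matrices are mutually inverse, as an identity of rational functions
in `σ` (stated for all `σ > 0`). -/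
theorem jackTransition_mul_inv (d : ℕ) (hd : 2 ≤ d) (σ : ℝ) (hσ : 0 < σ) :
    jackTransition d σ * jackTransitionInv d σ = 1 := by
  ext i j
  have hi2 : (i:ℕ) ≤ d/2 := by omega
  have hj2 : (j:ℕ) ≤ d/2 := by omega
  have hdiv : 2 * (d/2) ≤ d := Nat.mul_div_le d 2 |>.trans (le_refl d) |>.trans (le_refl d)
  rw [Matrix.mul_apply, Matrix.one_apply]
  simp only [jackTransition, jackTransitionInv, Matrix.of_apply]
  rcases lt_trichotomy ((i:ℕ)) ((j:ℕ)) with hlt | heq | hgt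
  · -- i < j : sum is 0
    rw [if_neg (by intro h; exact absurd (congrArg Fin.val h) (by omega))]
    have hm1 : 1 ≤ (j:ℕ) - (i:ℕ) := by omega
    have hmn : 2*((j:ℕ) - (i:ℕ)) ≤ d - 2*(i:ℕ) := by omega
    have hn' : ((d - 2*(i:ℕ) : ℕ):ℝ) = (d:ℝ) - 2*((i:ℕ):ℝ) := by
      push_cast [Nat.cast_sub (by omega : 2*(i:ℕ) ≤ d)]; ring
    have hm' : (((j:ℕ) - (i:ℕ) : ℕ):ℝ) = ((j:ℕ):ℝ) - ((i:ℕ):ℝ) := by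
      push_cast [Nat.cast_sub (by omega : (i:ℕ) ≤ (j:ℕ))]; ring
    have key0 := key (d - 2*(i:ℕ)) ((j:ℕ) - (i:ℕ)) hm1 hmn σ hσ
    rw [Fin.sum_univ_eq_sum_range (fun k : ℕ =>
      (if (i:ℕ) ≤ k then
        ((d - 2*(i:ℕ)).choose (k - (i:ℕ)) : ℝ) * poch σ (k - (i:ℕ)) *
          poch σ (d - k - (i:ℕ)) / poch σ (d - 2*(i:ℕ)) else 0) *
      (if k ≤ (j:ℕ) then
        (-1:ℝ)^((j:ℕ) - k) * ((d - k - (j:ℕ)).choose ((j:ℕ) - k) : ℝ) *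
          (if k = (j:ℕ) then (1:ℝ) else ((d:ℝ) - 2*(k:ℝ))/((d:ℝ) - (k:ℝ) - ((j:ℕ):ℝ))) *
          poch (σ + (k:ℝ) - ((j:ℕ):ℝ) + 1) (d - k - (j:ℕ)) *
          poch (σ + (d:ℝ) - (k:ℝ) - ((j:ℕ):ℝ) + 1) ((j:ℕ) - k) /
          poch (σ+1) (d - 2*k) else 0)) (d/2+1)]
    rw [← Finset.sum_subset (by intro x hx; simp only [Finset.mem_Icc] at hx
                                simp only [Finset.mem_range]; omega :
        Finset.Icc ((i:ℕ)) ((j:ℕ)) ⊆ Finset.range (d/2+1))]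
    · rw [← Finset.Ico_add_one_right_eq_Icc, Finset.sum_Ico_eq_sum_range, show (j:ℕ)+1-(i:ℕ) = ((j:ℕ)-(i:ℕ))+1 from by omega]
      refine Eq.trans (Finset.sum_congr rfl ?_) key0
      intro t ht
      simp only [Finset.mem_range] at ht
      rw [if_pos (Nat.le_add_right _ _), if_pos (by omega : (i:ℕ)+t ≤ (j:ℕ))]
      rw [if_congr (by omega : ((i:ℕ)+t = (j:ℕ)) ↔ (t = (j:ℕ)-(i:ℕ))) rfl rfl]
      rw [show (i:ℕ) + t - (i:ℕ) = t from by omega,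
        show d - ((i:ℕ)+t) - (i:ℕ) = d - 2*(i:ℕ) - t from by omega,
        show d - ((i:ℕ)+t) - (j:ℕ) = d - 2*(i:ℕ) - ((j:ℕ)-(i:ℕ)) - t from by omega,
        show (j:ℕ) - ((i:ℕ)+t) = (j:ℕ) - (i:ℕ) - t from by omega,
        show d - 2*((i:ℕ)+t) = d - 2*(i:ℕ) - 2*t from by omega,
        show ((d:ℝ) - 2*(((i:ℕ)+t : ℕ):ℝ))/((d:ℝ) - (((i:ℕ)+t : ℕ):ℝ) - ((j:ℕ):ℝ)) =
          (((d - 2*(i:ℕ) : ℕ):ℝ) - 2*(t:ℝ)) / (((d - 2*(i:ℕ) : ℕ):ℝ) - (((j:ℕ)-(i:ℕ) : ℕ):ℝ) - (t:ℝ)) from by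
            rw [hn', hm']; push_cast; ring,
        show (σ + (((i:ℕ)+t : ℕ):ℝ) - ((j:ℕ):ℝ) + 1 : ℝ) =
          σ + (t:ℝ) - (((j:ℕ)-(i:ℕ) : ℕ):ℝ) + 1 from by rw [hm']; push_cast; ring,
        show (σ + (d:ℝ) - (((i:ℕ)+t : ℕ):ℝ) - ((j:ℕ):ℝ) + 1 : ℝ) =
          σ + (((d - 2*(i:ℕ) : ℕ):ℝ) - (((j:ℕ)-(i:ℕ) : ℕ):ℝ) - (t:ℝ)) + 1 from by
            rw [hn', hm']; push_cast; ring]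
    · intro x hx hx2
      simp only [Finset.mem_Icc, not_and_or, not_le] at hx2
      rcases hx2 with h | h
      · rw [if_neg (by omega : ¬ ((i:ℕ) ≤ x)), zero_mul]
      · rw [if_neg (by omega : ¬ (x ≤ (j:ℕ))), mul_zero]
  · -- i = j : entry is 1
    have hij : i = j := Fin.ext heq
    subst hij
    rw [if_pos rfl, Finset.sum_eq_single i]
    · rw [if_pos (le_refl _), if_pos (le_refl _), if_pos rfl]
      simp only [Nat.sub_self, poch_zero, Nat.choose_zero_right, Nat.cast_one, pow_zero,
        mul_one, one_mul]
      rw [show d - (i:ℕ) - (i:ℕ) = d - 2*(i:ℕ) from by omega,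
        show (σ + ((i:ℕ):ℝ) - ((i:ℕ):ℝ) + 1 : ℝ) = σ + 1 from by push_cast; ring]
      rw [div_mul_div_comm, div_eq_one_iff_eq
        (ne_of_gt (mul_pos (poch_pos hσ _) (poch_pos (by linarith) _)))]
    · intro k _ hk
      have hk' : (k:ℕ) ≠ (i:ℕ) := fun h => hk (Fin.ext h)
      rcases le_or_gt ((i:ℕ)) ((k:ℕ)) with h | h
      · rw [if_neg (by omega : ¬ ((k:ℕ) ≤ (i:ℕ))), mul_zero]
      · rw [if_neg (by omega : ¬ ((i:ℕ) ≤ (k:ℕ))), zero_mul]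
    · intro h; exact absurd (Finset.mem_univ i) h
  · -- i > j : sum is 0
    rw [if_neg (by intro h; exact absurd (congrArg Fin.val h) (by omega))]
    apply Finset.sum_eq_zero
    intro k _
    rcases le_or_gt ((i:ℕ)) ((k:ℕ)) with h | h
    · rw [if_neg (by omega : ¬ ((k:ℕ) ≤ (j:ℕ))), mul_zero]
    · rw [if_neg (by omega : ¬ ((i:ℕ) ≤ (k:ℕ))), zero_mul]
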